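/- For any ring R and any n ≥ 2: R is inner McCoy if and only if the ring DUT_n(R) of n×n upper triangular matrices over R with constant diagonal is inner McCoy. -/

import Mathlib

def IsInnerMcCoy (S : Type*) [Ring S] : Prop :=
  ∀ f g : Polynomial S, f ≠ 0 → g ≠ 0 → f * g * f = 0 →
    ∃ r : S, r ≠ 0 ∧ f * Polynomial.C r * f = 0

/-- The subring of upper triangular `n × n` matrices over `R` with constant diagonal. -/
def DUT (R : Type*) [Ring R] (n : ℕ) : Subring (Matrix (Fin n) (Fin n) R) where
  carrier := {M | (∀ i j : Fin n, j < i → M i j = 0) ∧ ∀ i j : Fin n, M i i = M j j}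
  zero_mem' := ⟨fun _ _ _ => rfl, fun _ _ => rfl⟩
  one_mem' := ⟨fun _ _ h => Matrix.one_apply_ne (ne_of_lt h).symm,
    fun i j => by rw [Matrix.one_apply_eq, Matrix.one_apply_eq]⟩
  add_mem' := by
    rintro A B ⟨hA1, hA2⟩ ⟨hB1, hB2⟩
    refine ⟨fun i j hij => by simp [Matrix.add_apply, hA1 i j hij, hB1 i j hij],
      fun i j => by simp [Matrix.add_apply, hA2 i j, hB2 i j]⟩
  neg_mem' := by
    rintro A ⟨hA1, hA2⟩
    exact ⟨fun i j hij => by simp [Matrix.neg_apply, hA1 i j hij],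
      fun i j => by simp [Matrix.neg_apply, hA2 i j]⟩
  mul_mem' := by
    rintro A B ⟨hA1, hA2⟩ ⟨hB1, hB2⟩
    constructor
    · intro i j hij
      rw [Matrix.mul_apply]
      apply Finset.sum_eq_zero
      intro k _
      rcases lt_or_ge k i with hk | hk
      · rw [hA1 i k hk, zero_mul]
      · rw [hB1 k j (lt_of_lt_of_le hij hk), mul_zero]
    · intro i j
      have key : ∀ m : Fin n, (A * B) m m = A m m * B m m := by
        intro m
        rw [Matrix.mul_apply]
        apply Finset.sum_eq_single
        · intro k _ hk
          rcases lt_or_gt_of_ne hk with h | h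
          · rw [hA1 m k h, zero_mul]
          · rw [hB1 k m h, mul_zero]
        · intro h
          exact absurd (Finset.mem_univ m) h
      rw [key i, key j, hA2 i j, hB2 i j]

section InnerMcCoyAux

open Polynomial Matrix

variable {R : Type*} [Ring R] {n : ℕ}

/-- Polynomials of matrices to matrices of polynomials, as a ring hom (noncommutative base). -/
noncomputable def psiDUT (R : Type*) [Ring R] (n : ℕ) :
    (Matrix (Fin n) (Fin n) R)[X] →+* Matrix (Fin n) (Fin n) R[X] :=
  Polynomial.eval₂RingHom' ((Polynomial.C : R →+* R[X]).mapMatrix)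
    (Matrix.diagonal fun _ => (Polynomial.X : R[X]))
    (fun M => by
      unfold Commute SemiconjBy
      ext i j
      rw [Matrix.mul_diagonal, Matrix.diagonal_mul]
      rw [Polynomial.X_mul])

theorem psiDUT_coeff (p : (Matrix (Fin n) (Fin n) R)[X]) (k : ℕ) (i j : Fin n) :
    (psiDUT R n p i j).coeff k = p.coeff k i j := by
  induction p using Polynomial.induction_on' with
  | add p q hp hq => simp [Matrix.add_apply, hp, hq]
  | monomial m a =>
      have h1 : psiDUT R n (monomial m a)
          = ((Polynomial.C : R →+* R[X]).mapMatrix a) * (Matrix.diagonal fun _ => (X : R[X])) ^ m := by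
        simp [psiDUT, Polynomial.eval₂RingHom', Polynomial.eval₂_monomial]
      rw [h1, Matrix.diagonal_pow, Matrix.mul_diagonal]
      simp only [RingHom.mapMatrix_apply, Matrix.map_apply, Polynomial.coeff_monomial, Pi.pow_apply]
      rw [Polynomial.coeff_C_mul, Polynomial.coeff_X_pow]
      by_cases hmk : m = k
      · subst hmk; simp
      · rw [if_neg (fun h => hmk h.symm), if_neg hmk, mul_zero, Matrix.zero_apply]

/-- The composite map from polynomials over `DUT R n` to matrices of polynomials. -/
noncomputable def phiDUT (R : Type*) [Ring R] (n : ℕ) :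
    (DUT R n)[X] →+* Matrix (Fin n) (Fin n) R[X] :=
  (psiDUT R n).comp (Polynomial.mapRingHom (DUT R n).subtype)

theorem phiDUT_coeff (F : (DUT R n)[X]) (k : ℕ) (i j : Fin n) :
    (phiDUT R n F i j).coeff k = ((F.coeff k : DUT R n) : Matrix (Fin n) (Fin n) R) i j := by
  rw [phiDUT, RingHom.comp_apply, psiDUT_coeff]
  rw [Polynomial.coe_mapRingHom, Polynomial.coeff_map]
  rfl

theorem phiDUT_eq_zero {F : (DUT R n)[X]} (h : phiDUT R n F = 0) : F = 0 := by
  ext k i j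
  have := phiDUT_coeff F k i j
  rw [h] at this
  simpa using this.symm

theorem phiDUT_upper (F : (DUT R n)[X]) {i j : Fin n} (hij : j < i) :
    phiDUT R n F i j = 0 := by
  ext k
  rw [phiDUT_coeff, Polynomial.coeff_zero]
  exact (F.coeff k).2.1 i j hij

theorem phiDUT_diag (F : (DUT R n)[X]) (i j : Fin n) :
    phiDUT R n F i i = phiDUT R n F j j := by
  ext k
  rw [phiDUT_coeff, phiDUT_coeff]
  exact (F.coeff k).2.2 i j

theorem phiDUT_C (A : DUT R n) :
    phiDUT R n (Polynomial.C A) = (A : Matrix (Fin n) (Fin n) R).map Polynomial.C := by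
  rw [phiDUT, RingHom.comp_apply, Polynomial.coe_mapRingHom, Polynomial.map_C]
  rw [psiDUT]
  exact Polynomial.eval₂_C _ _

/-- Sandwiching a corner standard basis matrix by upper triangular matrices. -/
theorem dut_sandwich {S : Type*} [Ring S] {n : ℕ} (M : Matrix (Fin n) (Fin n) S)
    (hup : ∀ i j : Fin n, j < i → M i j = 0) (i0 jn : Fin n)
    (h0 : ∀ i, i0 ≤ i) (hjn : ∀ i, i ≤ jn) (c : S) :
    M * Matrix.single i0 jn c * M
      = Matrix.single i0 jn (M i0 i0 * c * M jn jn) := by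
  have h1 : M * Matrix.single i0 jn c
      = Matrix.single i0 jn (M i0 i0 * c) := by
    ext i j
    by_cases hj : j = jn
    · subst hj
      rw [Matrix.mul_single_apply_same]
      by_cases hi : i = i0
      · subst hi
        rw [Matrix.single_apply_same]
      · rw [hup i i0 (lt_of_le_of_ne (h0 i) (Ne.symm hi)), zero_mul,
          Matrix.single_apply_of_ne _ _ _ _ _ (fun h => hi h.1.symm)]
    · rw [Matrix.mul_single_apply_of_ne _ _ _ _ _ hj,
        Matrix.single_apply_of_ne _ _ _ _ _ (fun h => hj h.2.symm)]
  rw [h1]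
  ext i j
  by_cases hi : i = i0
  · subst hi
    rw [Matrix.single_mul_apply_same]
    by_cases hj : j = jn
    · subst hj
      rw [Matrix.single_apply_same]
    · rw [hup jn j (lt_of_le_of_ne (hjn j) hj), mul_zero,
        Matrix.single_apply_of_ne _ _ _ _ _ (fun h => hj h.2.symm)]
  · rw [Matrix.single_mul_apply_of_ne _ _ _ _ _ hi,
      Matrix.single_apply_of_ne _ _ _ _ _ (fun h => hi h.1.symm)]

/-- The scalar (constant diagonal) embedding of `R` into `DUT R n`. -/
def scalarDUT (R : Type*) [Ring R] (n : ℕ) : R →+* DUT R n where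
  toFun r := ⟨Matrix.diagonal fun _ => r,
    fun i j h => Matrix.diagonal_apply_ne _ (ne_of_lt h).symm,
    fun i j => by rw [Matrix.diagonal_apply_eq, Matrix.diagonal_apply_eq]⟩
  map_one' := by
    apply Subtype.ext
    simp
  map_mul' a b := by
    apply Subtype.ext
    push_cast
    rw [Matrix.diagonal_mul_diagonal]
  map_zero' := by
    apply Subtype.ext
    simp
  map_add' a b := by
    apply Subtype.ext
    push_cast
    rw [Matrix.diagonal_add]

theorem scalarDUT_coe (r : R) :
    ((scalarDUT R n r : DUT R n) : Matrix (Fin n) (Fin n) R)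
      = Matrix.diagonal fun _ => r := rfl

end InnerMcCoyAux

/-- For any ring `R` and `n ≥ 2`: `R` is inner McCoy iff `DUTₙ(R)` is inner McCoy. -/
theorem innerMcCoy_iff_dut (R : Type*) [Ring R] (n : ℕ) (hn : 2 ≤ n) :
    IsInnerMcCoy R ↔ IsInnerMcCoy (DUT R n) := by
  classical
  rcases subsingleton_or_nontrivial R with hR | hR
  · constructor <;> intro _ f g hf hg _
    · exact absurd (Subsingleton.elim f 0) hf
    · exact absurd (Subsingleton.elim f 0) hf
  set i0 : Fin n := ⟨0, by omega⟩ with hi0def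
  set jn : Fin n := ⟨n - 1, by omega⟩ with hjndef
  have h0 : ∀ i : Fin n, i0 ≤ i := fun i => by
    rw [Fin.le_def]; exact Nat.zero_le _
  have hjmax : ∀ i : Fin n, i ≤ jn := fun i => by
    rw [Fin.le_def, hjndef]
    show (i : ℕ) ≤ n - 1
    have := i.isLt
    omega
  have hi0jn : i0 ≠ jn := by
    intro h
    have h2 : (0 : ℕ) = n - 1 := congrArg Fin.val h
    omega
  have hmapstd : ∀ r : R, (Matrix.single i0 jn r).map (Polynomial.C (R := R))
      = Matrix.single i0 jn (Polynomial.C r) := by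
    intro r
    ext a b
    rw [Matrix.map_apply]
    by_cases hab : i0 = a ∧ jn = b
    · obtain ⟨rfl, rfl⟩ := hab
      rw [Matrix.single_apply_same, Matrix.single_apply_same]
    · rw [Matrix.single_apply_of_ne _ _ _ _ _ hab,
        Matrix.single_apply_of_ne _ _ _ _ _ hab, map_zero]
  constructor
  · intro hMc F G hF hG hFGF
    set M := (phiDUT R n) F with hM
    set N := (phiDUT R n) G with hN
    have hMup : ∀ i j : Fin n, j < i → M i j = 0 := fun i j h => phiDUT_upper F h
    have hNup : ∀ i j : Fin n, j < i → N i j = 0 := fun i j h => phiDUT_upper G h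
    have hMdiag : ∀ i j : Fin n, M i i = M j j := phiDUT_diag F
    have hMNM : M * N * M = 0 := by
      rw [hM, hN, ← map_mul, ← map_mul, hFGF, map_zero]
    have main : ∃ r : R, r ≠ 0 ∧ M i0 i0 * Polynomial.C r * M i0 i0 = 0 := by
      by_cases hd : M i0 i0 = 0
      · exact ⟨1, one_ne_zero, by rw [hd, zero_mul, zero_mul]⟩
      · have hN0 : N ≠ 0 := fun h => hG (phiDUT_eq_zero h)
        have hNex : ∃ p : Fin n × Fin n, N p.1 p.2 ≠ 0 := by
          by_contra hcon
          push_neg at hcon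
          exact hN0 (Matrix.ext fun i j => hcon (i, j))
        obtain ⟨p0, hp0⟩ := hNex
        obtain ⟨p, hpmem, hpmin⟩ := Finset.exists_min_image
          (Finset.univ.filter fun p : Fin n × Fin n => N p.1 p.2 ≠ 0)
          (fun p => (p.2 : ℕ) - (p.1 : ℕ))
          ⟨p0, Finset.mem_filter.2 ⟨Finset.mem_univ _, hp0⟩⟩
        obtain ⟨i, j⟩ := p
        have hNij : N i j ≠ 0 := (Finset.mem_filter.1 hpmem).2
        have hmin : ∀ k l : Fin n, (l : ℕ) - (k : ℕ) < (j : ℕ) - (i : ℕ) → N k l = 0 := by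
          intro k l hlt
          by_contra hkl
          have := hpmin (k, l) (Finset.mem_filter.2 ⟨Finset.mem_univ _, hkl⟩)
          simp only at this
          omega
        have key : (M * N * M) i j = M i i * N i j * M j j := by
          rw [Matrix.mul_apply]
          rw [Finset.sum_eq_single j]
          · rw [Matrix.mul_apply, Finset.sum_mul, Finset.sum_eq_single i]
            · intro k _ hk
              rcases lt_trichotomy k i with h | h | h
              · rw [hMup i k h, zero_mul, zero_mul]
              · exact absurd h hk
              · by_cases h2 : j < k
                · rw [hNup k j h2, mul_zero, zero_mul]
                · have h3 : N k j = 0 := by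
                    apply hmin
                    have h4 := Fin.lt_def.mp h
                    have h5 := Fin.le_def.mp (not_lt.mp h2)
                    omega
                  rw [h3, mul_zero, zero_mul]
            · intro h; exact absurd (Finset.mem_univ i) h
          · intro l _ hl
            rcases lt_trichotomy j l with h | h | h
            · rw [hMup l j h, mul_zero]
            · exact absurd h.symm hl
            · have hz : (M * N) i l = 0 := by
                rw [Matrix.mul_apply]
                apply Finset.sum_eq_zero
                intro k _
                rcases lt_or_ge k i with h5 | h5
                · rw [hMup i k h5, zero_mul]
                · rcases lt_or_ge l k with h6 | h6
                  · rw [hNup k l h6, mul_zero]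
                  · have h7 : N k l = 0 := by
                      apply hmin
                      have h8 := Fin.le_def.mp h5
                      have h9 := Fin.le_def.mp h6
                      have h10 := Fin.lt_def.mp h
                      omega
                    rw [h7, mul_zero]
              rw [hz, zero_mul]
          · intro h; exact absurd (Finset.mem_univ j) h
        have hk0 : M i i * N i j * M j j = 0 := by
          rw [← key, hMNM, Matrix.zero_apply]
        rw [hMdiag i j] at hk0
        obtain ⟨r, hr, hrel⟩ := hMc (M j j) (N i j) (by rwa [← hMdiag i0 j]) hNij hk0
        refine ⟨r, hr, ?_⟩
        rw [hMdiag i0 j]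
        exact hrel
    obtain ⟨r, hr, hrel⟩ := main
    have hmem : Matrix.single i0 jn r ∈ DUT R n := by
      constructor
      · intro a b hba
        apply Matrix.single_apply_of_ne
        rintro ⟨rfl, rfl⟩
        exact (h0 jn).not_gt hba
      · intro a b
        rw [Matrix.single_apply_of_ne _ _ _ _ _ (by rintro ⟨rfl, h⟩; exact hi0jn h.symm),
          Matrix.single_apply_of_ne _ _ _ _ _ (by rintro ⟨rfl, h⟩; exact hi0jn h.symm)]
    refine ⟨⟨Matrix.single i0 jn r, hmem⟩, ?_, ?_⟩
    · intro hA0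
      apply hr
      have h1 : Matrix.single i0 jn r = 0 := congrArg Subtype.val hA0
      have h2 := congrFun (congrFun h1 i0) jn
      rwa [Matrix.single_apply_same, Matrix.zero_apply] at h2
    · apply phiDUT_eq_zero
      rw [map_mul, map_mul, phiDUT_C, ← hM]
      have hcoe : ((⟨Matrix.single i0 jn r, hmem⟩ : DUT R n) : Matrix (Fin n) (Fin n) R)
          = Matrix.single i0 jn r := rfl
      rw [hcoe, hmapstd, dut_sandwich M hMup i0 jn h0 hjmax]
      rw [hMdiag jn i0, hrel, Matrix.single_zero]
  · intro hD f g hf hg hfgf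
    have σinj : Function.Injective (scalarDUT R n) := by
      intro a b hab
      have h1 := congrArg (fun x : DUT R n => (x : Matrix (Fin n) (Fin n) R) i0 i0) hab
      simpa only [scalarDUT_coe, Matrix.diagonal_apply_eq] using h1
    set F := f.map (scalarDUT R n) with hF
    set G := g.map (scalarDUT R n) with hG
    have hFne : F ≠ 0 := fun h => hf (Polynomial.map_injective _ σinj (by simpa using h))
    have hGne : G ≠ 0 := fun h => hg (Polynomial.map_injective _ σinj (by simpa using h))
    have hFGF : F * G * F = 0 := by
      rw [hF, hG, ← Polynomial.map_mul, ← Polynomial.map_mul, hfgf, Polynomial.map_zero]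
    obtain ⟨A, hA, hFAF⟩ := hD F G hFne hGne hFGF
    have hAmat : (A : Matrix (Fin n) (Fin n) R) ≠ 0 := fun h => hA (Subtype.ext h)
    have hex : ∃ i j, (A : Matrix (Fin n) (Fin n) R) i j ≠ 0 := by
      by_contra hcon
      push_neg at hcon
      exact hAmat (Matrix.ext fun i j => hcon i j)
    obtain ⟨i, j, hij⟩ := hex
    refine ⟨(A : Matrix (Fin n) (Fin n) R) i j, hij, ?_⟩
    have hΦF : phiDUT R n F = Matrix.diagonal fun _ => f := by
      ext a b k
      rw [phiDUT_coeff, hF, Polynomial.coeff_map]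
      by_cases hab : a = b
      · subst hab
        rw [Matrix.diagonal_apply_eq, scalarDUT_coe, Matrix.diagonal_apply_eq]
      · rw [Matrix.diagonal_apply_ne _ hab, scalarDUT_coe, Matrix.diagonal_apply_ne _ hab,
          Polynomial.coeff_zero]
    have h0' : phiDUT R n (F * Polynomial.C A * F) = 0 := by rw [hFAF, map_zero]
    rw [map_mul, map_mul, hΦF, phiDUT_C] at h0'
    have h1 := congrFun (congrFun h0' i) j
    rwa [Matrix.mul_diagonal, Matrix.diagonal_mul, Matrix.map_apply, Matrix.zero_apply] at h1
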